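/- Let n ≥ 1, R ≥ 2 and 1 ≤ c ≤ R − 1 be integers, let n_{c+1}, …, n_R ≥ 1 be integers with Σ_{j=c+1}^R n_j = n, let p⁰_1, …, p⁰_R be strictly positive reals with Σ_{r=1}^R p⁰_r = 1, and let a, b be real numbers. Then Q_{p⁰}(p̂^{ab}) = n^{2(1−b)} · Q_{p⁰}(p*) − f(a,b), where f(a,b) = n·(1 − n^{2(1−b)} + (2 n^{1−b}(ac + n^{1−b} − 1)/(R−c)) · Σ_{j=c+1}^R n_j/(n p⁰_j) − a² Σ_{i=1}^c 1/p⁰_i − ((ac + n^{1−b} − 1)/(R−c))² Σ_{j=c+1}^R 1/p⁰_j). -/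

import Mathlib

open Finset

/-- Closed-form expression for the corrected Pearson statistic:
`Q_{p⁰}(p̂^{ab}) = n^{2(1−b)} · Q_{p⁰}(p*) − f(a,b)`, where `p*` is the
maximum likelihood estimator (zeros in the first `c` cells) and `p̂^{ab}` is
the corrected estimator of the paper. -/
theorem corrected_pearson_statistic
    (n R c : ℕ) (hn : 1 ≤ n) (hR : 2 ≤ R) (hc1 : 1 ≤ c) (hcR : c ≤ R - 1)
    (nj : ℕ → ℕ) (hnj : ∀ j ∈ Finset.Icc (c + 1) R, 1 ≤ nj j)
    (hnsum : ∑ j ∈ Finset.Icc (c + 1) R, nj j = n)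
    (p0 : ℕ → ℝ) (hp0 : ∀ r ∈ Finset.Icc 1 R, 0 < p0 r)
    (hp0sum : ∑ r ∈ Finset.Icc 1 R, p0 r = 1)
    (a b : ℝ) :
    -- `Q_{p⁰}(p̂^{ab})`
    (n : ℝ) *
        (∑ i ∈ Finset.Icc 1 c, (a - p0 i) ^ 2 / p0 i +
          ∑ j ∈ Finset.Icc (c + 1) R,
            ((nj j : ℝ) / (n : ℝ) ^ b -
                (a * (c : ℝ) + (n : ℝ) ^ (1 - b) - 1) / ((R : ℝ) - (c : ℝ)) -
              p0 j) ^ 2 / p0 j) =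
      -- `n^{2(1−b)} · Q_{p⁰}(p*)`
      (n : ℝ) ^ (2 * (1 - b)) *
          ((n : ℝ) *
            (∑ i ∈ Finset.Icc 1 c, (0 - p0 i) ^ 2 / p0 i +
              ∑ j ∈ Finset.Icc (c + 1) R,
                ((nj j : ℝ) / (n : ℝ) - p0 j) ^ 2 / p0 j)) -
        -- `f(a,b)`
        (n : ℝ) *
          (1 - (n : ℝ) ^ (2 * (1 - b)) +
            2 * (n : ℝ) ^ (1 - b) *
                (a * (c : ℝ) + (n : ℝ) ^ (1 - b) - 1) / ((R : ℝ) - (c : ℝ)) *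
              ∑ j ∈ Finset.Icc (c + 1) R, (nj j : ℝ) / ((n : ℝ) * p0 j) -
            a ^ 2 * ∑ i ∈ Finset.Icc 1 c, 1 / p0 i -
            ((a * (c : ℝ) + (n : ℝ) ^ (1 - b) - 1) / ((R : ℝ) - (c : ℝ))) ^ 2 *
              ∑ j ∈ Finset.Icc (c + 1) R, 1 / p0 j) := by
  have hcR' : c < R := by omega
  have hnpos : (0:ℝ) < (n:ℝ) := by exact_mod_cast hn
  have hn0 : (n:ℝ) ≠ 0 := ne_of_gt hnpos
  have hRc : (R:ℝ) - (c:ℝ) ≠ 0 := by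
    have : (c:ℝ) < (R:ℝ) := by exact_mod_cast hcR'
    linarith
  have hnb : (0:ℝ) < (n:ℝ) ^ b := Real.rpow_pos_of_pos hnpos b
  have hp0ne : ∀ r ∈ Finset.Icc 1 R, p0 r ≠ 0 := fun r hr => ne_of_gt (hp0 r hr)
  have hsubI : ∀ i ∈ Finset.Icc 1 c, i ∈ Finset.Icc 1 R :=
    fun i hi => by simp only [Finset.mem_Icc] at *; omega
  have hsubJ : ∀ j ∈ Finset.Icc (c+1) R, j ∈ Finset.Icc 1 R :=
    fun j hj => by simp only [Finset.mem_Icc] at *; omega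
  set t := (n:ℝ) ^ (1 - b) with ht
  have htpos : (0:ℝ) < t := Real.rpow_pos_of_pos hnpos _
  have ht2 : (n:ℝ) ^ (2 * (1 - b)) = t ^ 2 := by
    rw [show 2 * (1 - b) = (1 - b) + (1 - b) by ring, Real.rpow_add hnpos, ht]; ring
  have htdiv : t = (n:ℝ) / (n:ℝ) ^ b := by
    rw [ht, Real.rpow_sub hnpos, Real.rpow_one]
  set K := (a * (c:ℝ) + t - 1) / ((R:ℝ) - (c:ℝ)) with hK
  set A := ∑ i ∈ Finset.Icc 1 c, 1 / p0 i with hA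
  set B := ∑ j ∈ Finset.Icc (c+1) R, 1 / p0 j with hB
  set P := ∑ i ∈ Finset.Icc 1 c, p0 i with hP
  set Qs := ∑ j ∈ Finset.Icc (c+1) R, p0 j with hQs
  set Y := ∑ j ∈ Finset.Icc (c+1) R, (nj j : ℝ) / p0 j with hY
  set Z := ∑ j ∈ Finset.Icc (c+1) R, (nj j : ℝ) ^ 2 / p0 j with hZ
  have hNsum : ∑ j ∈ Finset.Icc (c+1) R, (nj j : ℝ) = (n:ℝ) := by
    exact_mod_cast hnsum
  have hcard1 : ((Finset.Icc 1 c).card : ℝ) = (c : ℝ) := by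
    rw [Nat.card_Icc]; push_cast [Nat.add_sub_cancel]; ring
  have hcard2 : ((Finset.Icc (c+1) R).card : ℝ) = (R:ℝ) - (c:ℝ) := by
    rw [Nat.card_Icc, Nat.cast_sub (by omega)]; push_cast; ring
  have hPQ : P + Qs = 1 := by
    rw [hP, hQs, ← Finset.sum_union (by
      rw [Finset.disjoint_left]; intro x hx hx'
      simp only [Finset.mem_Icc] at hx hx'; omega),
      show Finset.Icc 1 c ∪ Finset.Icc (c+1) R = Finset.Icc 1 R from by
        ext x; simp only [Finset.mem_union, Finset.mem_Icc]; omega]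
    exact hp0sum
  have e1 : ∑ i ∈ Finset.Icc 1 c, (a - p0 i) ^ 2 / p0 i
      = a ^ 2 * A - 2 * a * (c:ℝ) + P := by
    rw [Finset.sum_congr rfl (fun i hi => show (a - p0 i) ^ 2 / p0 i
        = a ^ 2 * (1 / p0 i) - 2 * a + p0 i from by
      have h := hp0ne i (hsubI i hi); field_simp; ring)]
    rw [Finset.sum_add_distrib, Finset.sum_sub_distrib, ← Finset.mul_sum,
      Finset.sum_const, nsmul_eq_mul, hcard1, hA, hP]
    ring
  have e0 : ∑ i ∈ Finset.Icc 1 c, (0 - p0 i) ^ 2 / p0 i = P := by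
    rw [Finset.sum_congr rfl (fun i hi => show (0 - p0 i) ^ 2 / p0 i = p0 i from by
      have h := hp0ne i (hsubI i hi); field_simp; ring), hP]
  have e2 : ∑ j ∈ Finset.Icc (c+1) R,
      ((nj j : ℝ) / (n : ℝ) ^ b - K - p0 j) ^ 2 / p0 j
      = t ^ 2 / (n:ℝ) ^ 2 * Z + K ^ 2 * B + Qs - 2 * (t / (n:ℝ)) * K * Y
        - 2 * (t / (n:ℝ)) * (n:ℝ) + 2 * K * ((R:ℝ) - (c:ℝ)) := by
    rw [Finset.sum_congr rfl (fun j hj => show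
        ((nj j : ℝ) / (n : ℝ) ^ b - K - p0 j) ^ 2 / p0 j
        = t ^ 2 / (n:ℝ) ^ 2 * ((nj j : ℝ) ^ 2 / p0 j) + K ^ 2 * (1 / p0 j) + p0 j
          - 2 * (t / (n:ℝ)) * K * ((nj j : ℝ) / p0 j)
          - 2 * (t / (n:ℝ)) * (nj j : ℝ) + 2 * K from by
      have h := hp0ne j (hsubJ j hj)
      have hb' : (nj j : ℝ) / (n : ℝ) ^ b = t * (nj j : ℝ) / (n:ℝ) := by
        rw [htdiv]; field_simp
      rw [hb']; field_simp; ring)]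
    rw [Finset.sum_add_distrib, Finset.sum_sub_distrib, Finset.sum_sub_distrib,
      Finset.sum_add_distrib, Finset.sum_add_distrib,
      ← Finset.mul_sum, ← Finset.mul_sum, ← Finset.mul_sum, ← Finset.mul_sum,
      Finset.sum_const, nsmul_eq_mul, hcard2, hNsum, hZ, hB, hQs, hY]
    ring
  have e3 : ∑ j ∈ Finset.Icc (c+1) R, ((nj j : ℝ) / (n:ℝ) - p0 j) ^ 2 / p0 j
      = 1 / (n:ℝ) ^ 2 * Z - 2 + Qs := by
    rw [Finset.sum_congr rfl (fun j hj => show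
        ((nj j : ℝ) / (n:ℝ) - p0 j) ^ 2 / p0 j
        = 1 / (n:ℝ) ^ 2 * ((nj j : ℝ) ^ 2 / p0 j) - 2 / (n:ℝ) * (nj j : ℝ) + p0 j from by
      have h := hp0ne j (hsubJ j hj); field_simp; ring)]
    rw [Finset.sum_add_distrib, Finset.sum_sub_distrib, ← Finset.mul_sum,
      ← Finset.mul_sum, hNsum, hZ, hQs]
    field_simp
  have e4 : ∑ j ∈ Finset.Icc (c+1) R, (nj j : ℝ) / ((n:ℝ) * p0 j) = 1 / (n:ℝ) * Y := by
    rw [Finset.mul_sum, Finset.sum_congr rfl (fun j hj => show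
        (nj j : ℝ) / ((n:ℝ) * p0 j) = 1 / (n:ℝ) * ((nj j : ℝ) / p0 j) from by
      have h := hp0ne j (hsubJ j hj); field_simp)]
  have hQ1 : Qs = 1 - P := by linarith
  rw [e1, e0, e2, e3, e4, ht2, hQ1, hK]
  field_simp
  ring
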